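/- Fix strikes 0 < K_1 < … < K_N and a barrier U > 0. Let σ_* = (σ_{*1}, σ_{*2}) and σ^* = (σ^*_1, σ^*_2) be pairs of positive numbers, and suppose there are indices i, j with K_i < U and U + (U−K_i)·σ^*_2/σ^*_1 < K_j ≤ U + (U−K_i)·σ_{*2}/σ_{*1} (in particular j̲ = max{ j : U < K_j ≤ U + (U−K_i)·σ_{*2}/σ_{*1} } is well defined). Let Σ^{σ^*} be the PCLVG implied volatility surface for σ^*. Let T > 0, let S = U, and let Σ : {K_1,…,K_N} × (0,T] → (0,∞) satisfy the upper beliefs generated by Σ^{σ^*} on (0,T]. Then there exists T' ∈ (0,T] such that for all τ ∈ (0,T'], the risk-reversal portfolio has a strictly negative price: C^bs(U, K_{j̲}, τ, Σ(K_{j̲},τ)) − P^bs(U, K_i, τ, Σ(K_i,τ)) < 0. -/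

import Mathlib

open MeasureTheory Filter Set

/-- Standard normal cumulative distribution function. -/
noncomputable def stdNormalCDF (x : ℝ) : ℝ :=
  (Real.sqrt (2 * Real.pi))⁻¹ * ∫ y in Set.Iic x, Real.exp (-(y ^ 2) / 2)

/-- Black–Scholes call price with zero interest and dividend rates. -/
noncomputable def bsCall (S K τ σ : ℝ) : ℝ :=
  let d1 := (Real.log (S / K) + σ ^ 2 * τ / 2) / (σ * Real.sqrt τ)
  S * stdNormalCDF d1 - K * stdNormalCDF (d1 - σ * Real.sqrt τ)

/-- Black–Scholes put price with zero interest and dividend rates. -/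
noncomputable def bsPut (S K τ σ : ℝ) : ℝ := bsCall S K τ σ - S + K

/-- The denominator appearing in the PCLVG call price formula. -/
noncomputable def pclvgD (σ1 σ2 U τ : ℝ) : ℝ :=
  1 / σ1 + 1 / σ2 - (1 / σ2 - 1 / σ1) * Real.exp (-2 * U / (σ1 * τ))

/-- The explicit PCLVG call price `C^σ(U,K,τ)`. -/
noncomputable def pclvgCall (σ1 σ2 U K τ : ℝ) : ℝ :=
  if K < U then
    (U - K) +
      τ * Real.exp (-(U - K) / (σ1 * τ)) * (1 - Real.exp (-2 * K / (σ1 * τ))) /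
        pclvgD σ1 σ2 U τ
  else
    τ * Real.exp (-(K - U) / (σ2 * τ)) * (1 - Real.exp (-2 * U / (σ1 * τ))) /
      pclvgD σ1 σ2 U τ

/-- The PCLVG put price `P^σ(U,K,τ) = C^σ(U,K,τ) − (U − K)`. -/
noncomputable def pclvgPut (σ1 σ2 U K τ : ℝ) : ℝ := pclvgCall σ1 σ2 U K τ - (U - K)




noncomputable def npdf (x : ℝ) : ℝ :=
  (Real.sqrt (2 * Real.pi))⁻¹ * Real.exp (-(x ^ 2) / 2)

lemma npdf_pos (x : ℝ) : 0 < npdf x := by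
  unfold npdf
  have : (0:ℝ) < Real.pi := Real.pi_pos
  positivity

lemma gauss_integrable : Integrable (fun y : ℝ => Real.exp (-(y ^ 2) / 2)) := by
  have h := integrable_exp_neg_mul_sq (by norm_num : (0:ℝ) < 1/2)
  have he : (fun y : ℝ => Real.exp (-(y ^ 2) / 2)) = fun y : ℝ => Real.exp (-(1/2) * y ^ 2) := by
    funext y; congr 1; ring
  rw [he]; exact h

lemma stdNormalCDF_hasDerivAt (x : ℝ) : HasDerivAt stdNormalCDF (npdf x) x := by
  have hg := gauss_integrable
  have hcont : Continuous fun y : ℝ => Real.exp (-(y ^ 2) / 2) := by continuity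
  have h1 : HasDerivAt (fun u => ∫ y in (0:ℝ)..u, Real.exp (-(y ^ 2) / 2))
      (Real.exp (-(x ^ 2) / 2)) x :=
    intervalIntegral.integral_hasDerivAt_right (hg.intervalIntegrable)
      (hcont.aestronglyMeasurable.stronglyMeasurableAtFilter) hcont.continuousAt
  have h2 : HasDerivAt (fun u => (Real.sqrt (2 * Real.pi))⁻¹ *
      ((∫ y in Set.Iic (0:ℝ), Real.exp (-(y ^ 2) / 2)) +
        ∫ y in (0:ℝ)..u, Real.exp (-(y ^ 2) / 2)))
      ((Real.sqrt (2 * Real.pi))⁻¹ * Real.exp (-(x ^ 2) / 2)) x :=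
    (h1.const_add _).const_mul _
  have hfun : stdNormalCDF = fun u => (Real.sqrt (2 * Real.pi))⁻¹ *
      ((∫ y in Set.Iic (0:ℝ), Real.exp (-(y ^ 2) / 2)) +
        ∫ y in (0:ℝ)..u, Real.exp (-(y ^ 2) / 2)) := by
    funext u
    unfold stdNormalCDF
    rw [← intervalIntegral.integral_Iic_sub_Iic hg.integrableOn hg.integrableOn]
    ring
  rw [hfun]
  exact h2

noncomputable def bsv (S K v : ℝ) : ℝ :=
  S * stdNormalCDF (Real.log (S / K) / v + v / 2) -
    K * stdNormalCDF (Real.log (S / K) / v - v / 2)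

lemma bsv_hasDerivAt (S K : ℝ) (hS : 0 < S) (hK : 0 < K) {v : ℝ} (hv : 0 < v) :
    HasDerivAt (bsv S K) (S * npdf (Real.log (S / K) / v + v / 2)) v := by
  set l := Real.log (S / K) with hl
  have hv' : v ≠ 0 := hv.ne'
  have hd1 : HasDerivAt (fun v : ℝ => l / v + v / 2) (l * -(v ^ 2)⁻¹ + 1 / 2) v := by
    have := ((hasDerivAt_inv hv').const_mul l).add ((hasDerivAt_id v).div_const 2)
    simpa [div_eq_mul_inv, Pi.add_def] using this
  have hd2 : HasDerivAt (fun v : ℝ => l / v - v / 2) (l * -(v ^ 2)⁻¹ - 1 / 2) v := by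
    have := ((hasDerivAt_inv hv').const_mul l).sub ((hasDerivAt_id v).div_const 2)
    simpa [div_eq_mul_inv, Pi.sub_def] using this
  have hN1 : HasDerivAt (fun v : ℝ => stdNormalCDF (l / v + v / 2))
      (npdf (l / v + v / 2) * (l * -(v ^ 2)⁻¹ + 1 / 2)) v :=
    (stdNormalCDF_hasDerivAt _).comp v hd1
  have hN2 : HasDerivAt (fun v : ℝ => stdNormalCDF (l / v - v / 2))
      (npdf (l / v - v / 2) * (l * -(v ^ 2)⁻¹ - 1 / 2)) v :=
    (stdNormalCDF_hasDerivAt _).comp v hd2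
  have hraw : HasDerivAt (bsv S K)
      (S * (npdf (l / v + v / 2) * (l * -(v ^ 2)⁻¹ + 1 / 2)) -
        K * (npdf (l / v - v / 2) * (l * -(v ^ 2)⁻¹ - 1 / 2))) v :=
    (hN1.const_mul S).sub (hN2.const_mul K)
  have hKS : K * npdf (l / v - v / 2) = S * npdf (l / v + v / 2) := by
    unfold npdf
    have hsq : (l / v + v / 2) ^ 2 = (l / v - v / 2) ^ 2 + 2 * l := by
      field_simp; ring
    have hexp : Real.exp (-((l / v + v / 2) ^ 2) / 2) =
        Real.exp (-((l / v - v / 2) ^ 2) / 2) * Real.exp (-l) := by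
      rw [← Real.exp_add]
      congr 1
      rw [hsq]; ring
    have hel : Real.exp (-l) = K / S := by
      rw [hl, Real.exp_neg, Real.exp_log (div_pos hS hK), inv_div]
    rw [hexp, hel]
    field_simp
  have heq : S * (npdf (l / v + v / 2) * (l * -(v ^ 2)⁻¹ + 1 / 2)) -
        K * (npdf (l / v - v / 2) * (l * -(v ^ 2)⁻¹ - 1 / 2)) =
      S * npdf (l / v + v / 2) := by
    linear_combination (1 / 2 - l * -(v ^ 2)⁻¹) * hKS
  rw [← heq]
  exact hraw

lemma bsv_strictMonoOn (S K : ℝ) (hS : 0 < S) (hK : 0 < K) :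
    StrictMonoOn (bsv S K) (Set.Ioi 0) := by
  apply strictMonoOn_of_deriv_pos (convex_Ioi 0)
  · intro v hv
    exact ((bsv_hasDerivAt S K hS hK hv).continuousAt).continuousWithinAt
  · intro v hv
    rw [interior_Ioi] at hv
    rw [(bsv_hasDerivAt S K hS hK hv).deriv]
    exact mul_pos hS (npdf_pos _)


lemma bsCall_eq_bsv (S K τ σ : ℝ) (hτ : 0 < τ) (hσ : 0 < σ) :
    bsCall S K τ σ = bsv S K (σ * Real.sqrt τ) := by
  have hs : 0 < Real.sqrt τ := Real.sqrt_pos.mpr hτ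
  have hv : σ * Real.sqrt τ ≠ 0 := by positivity
  have h2 : σ ^ 2 * τ = (σ * Real.sqrt τ) ^ 2 := by
    rw [mul_pow, Real.sq_sqrt hτ.le]
  have e1 : (Real.log (S / K) + σ ^ 2 * τ / 2) / (σ * Real.sqrt τ) =
      Real.log (S / K) / (σ * Real.sqrt τ) + (σ * Real.sqrt τ) / 2 := by
    rw [h2]; field_simp
  simp only [bsCall, bsv, e1]
  congr 2
  ring

lemma bsCall_mono (S K τ : ℝ) (hS : 0 < S) (hK : 0 < K) (hτ : 0 < τ) {σa σb : ℝ}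
    (ha : 0 < σa) (hb : 0 < σb) (hab : σa ≤ σb) : bsCall S K τ σa ≤ bsCall S K τ σb := by
  rw [bsCall_eq_bsv S K τ σa hτ ha, bsCall_eq_bsv S K τ σb hτ hb]
  have hs : 0 < Real.sqrt τ := Real.sqrt_pos.mpr hτ
  exact (bsv_strictMonoOn S K hS hK).monotoneOn (by positivity : (0:ℝ) < σa * Real.sqrt τ)
    (by positivity : (0:ℝ) < σb * Real.sqrt τ)
    (mul_le_mul_of_nonneg_right hab hs.le)

lemma bsCall_scale (S K τ σ c : ℝ) (hτ : 0 < τ) (hσ : 0 < σ) (hc : 0 < c) :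
    bsCall S K τ (c * σ) = bsCall S K (c ^ 2 * τ) σ := by
  have hc2 : 0 < c ^ 2 * τ := by positivity
  rw [bsCall_eq_bsv S K τ (c * σ) hτ (by positivity), bsCall_eq_bsv S K _ σ hc2 hσ]
  congr 1
  rw [Real.sqrt_mul (sq_nonneg c), Real.sqrt_sq hc.le]
  ring



lemma pclvgD_pos (σ1 σ2 U τ : ℝ) (h1 : 0 < σ1) (h2 : 0 < σ2) (hU : 0 < U) (hτ : 0 < τ) :
    0 < pclvgD σ1 σ2 U τ := by
  unfold pclvgD
  have hx : -2 * U / (σ1 * τ) < 0 := div_neg_of_neg_of_pos (by linarith) (by positivity)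
  have he1 : Real.exp (-2 * U / (σ1 * τ)) < 1 := Real.exp_lt_one_iff.mpr hx
  have he0 : 0 < Real.exp (-2 * U / (σ1 * τ)) := Real.exp_pos _
  have i1 : (0:ℝ) < 1 / σ1 := by positivity
  have i2 : (0:ℝ) < 1 / σ2 := by positivity
  nlinarith

lemma pclvg_key (σ1 σ2 U Ki Kj : ℝ) (h1 : 0 < σ1) (h2 : 0 < σ2) (h0i : 0 < Ki)
    (hi : Ki < U) (hj : U + (U - Ki) * σ2 / σ1 < Kj) :
    ∃ s0 : ℝ, 0 < s0 ∧ ∀ s : ℝ, 0 < s → s ≤ s0 →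
      pclvgCall σ1 σ2 U Kj s < pclvgPut σ1 σ2 U Ki s := by
  have hU : 0 < U := h0i.trans hi
  set a := (Kj - U) / σ2 with ha
  set b := (U - Ki) / σ1 with hb
  set m := 2 * Ki / σ1 with hm
  have hba : b < a := by
    have h' : (U - Ki) * σ2 / σ1 < Kj - U := by linarith
    have h'' : (U - Ki) * σ2 < (Kj - U) * σ1 := (div_lt_iff₀ h1).mp h'
    rw [ha, hb, div_lt_div_iff₀ h1 h2]
    nlinarith
  have hb0 : 0 < b := by rw [hb]; exact div_pos (by linarith) h1
  have hm0 : 0 < m := by rw [hm]; exact div_pos (by linarith) h1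
  have hmin : 0 < min (a - b) m := lt_min (by linarith) hm0
  refine ⟨min (a - b) m / 2, by linarith, fun s hs hs0 => ?_⟩
  have hD : 0 < pclvgD σ1 σ2 U s := pclvgD_pos σ1 σ2 U s h1 h2 hU hs
  have hKjU : ¬ Kj < U := by
    push_neg
    have := div_nonneg (mul_nonneg (by linarith : (0:ℝ) ≤ U - Ki) h2.le) h1.le
    linarith
  rw [pclvgPut, pclvgCall, pclvgCall, if_neg hKjU, if_pos hi]
  have harg1 : -(Kj - U) / (σ2 * s) = -(a / s) := by rw [ha]; field_simp
  have harg2 : -(U - Ki) / (σ1 * s) = -(b / s) := by rw [hb]; field_simp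
  have harg3 : -2 * Ki / (σ1 * s) = -(m / s) := by rw [hm]; field_simp
  rw [harg1, harg2, harg3]
  have h2s : 2 * s ≤ a - b := by have := min_le_left (a - b) m; linarith
  have h2m : 2 * s ≤ m := by have := min_le_right (a - b) m; linarith
  have e1 : Real.exp (-((a - b) / s)) ≤ Real.exp (-2) := by
    apply Real.exp_le_exp.mpr
    rw [neg_le_neg_iff, le_div_iff₀ hs]
    linarith
  have em : Real.exp (-(m / s)) ≤ Real.exp (-2) := by
    apply Real.exp_le_exp.mpr
    rw [neg_le_neg_iff, le_div_iff₀ hs]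
    linarith
  have he2 : Real.exp (-2 : ℝ) < 1 / 2 := by
    rw [Real.exp_neg]
    have h3 : (3 : ℝ) ≤ Real.exp 2 := by have := Real.add_one_le_exp (2 : ℝ); linarith
    have : (Real.exp 2)⁻¹ ≤ 3⁻¹ := by
      apply inv_anti₀ (by norm_num) h3
    linarith
  have hp : 0 < Real.exp (-(b / s)) := Real.exp_pos _
  have hE1 : Real.exp (-(a / s)) = Real.exp (-(b / s)) * Real.exp (-((a - b) / s)) := by
    rw [← Real.exp_add]
    congr 1
    field_simp
    ring
  have key : Real.exp (-(a / s)) * (1 - Real.exp (-2 * U / (σ1 * s))) <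
      Real.exp (-(b / s)) * (1 - Real.exp (-(m / s))) := by
    calc Real.exp (-(a / s)) * (1 - Real.exp (-2 * U / (σ1 * s)))
        < Real.exp (-(a / s)) * 1 :=
          mul_lt_mul_of_pos_left (by linarith [Real.exp_pos (-2 * U / (σ1 * s))])
            (Real.exp_pos _)
      _ = Real.exp (-(b / s)) * Real.exp (-((a - b) / s)) := by rw [hE1]; ring
      _ ≤ Real.exp (-(b / s)) * Real.exp (-2) := mul_le_mul_of_nonneg_left e1 hp.le
      _ < Real.exp (-(b / s)) * (1 - Real.exp (-2)) :=
          mul_lt_mul_of_pos_left (by linarith) hp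
      _ ≤ Real.exp (-(b / s)) * (1 - Real.exp (-(m / s))) :=
          mul_le_mul_of_nonneg_left (by linarith) hp.le
  have main : s * Real.exp (-(a / s)) * (1 - Real.exp (-2 * U / (σ1 * s))) <
      s * Real.exp (-(b / s)) * (1 - Real.exp (-(m / s))) := by
    have := mul_lt_mul_of_pos_left key hs
    rw [← mul_assoc, ← mul_assoc] at this
    exact this
  have hdiv := (div_lt_div_iff_of_pos_right hD).mpr main
  linarith

/-- Second defining property of the RTIS portfolio (Proposition 5.2 of the
paper): if the market implied volatility satisfies the upper beliefs generated by a PCLVG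
surface with lower skewness (in the sense of the strike condition
`U + (U−K_i)σ*₂/σ*₁ < K_j ≤ U + (U−K_i)σ_{*2}/σ_{*1}`), and the spot is at the barrier, then
the risk-reversal portfolio has a strictly negative price for all sufficiently small
maturities. -/
theorem rtis_negative_price (n : ℕ) (K : Fin n → ℝ)
    (hKpos : ∀ j, 0 < K j) (hKmono : StrictMono K)
    (U : ℝ) (hU : 0 < U)
    (σl1 σl2 : ℝ) (hl1 : 0 < σl1) (hl2 : 0 < σl2)
    (σu1 σu2 : ℝ) (hu1 : 0 < σu1) (hu2 : 0 < σu2)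
    (i j : Fin n) (hi : K i < U)
    (hj1 : U + (U - K i) * σu2 / σu1 < K j)
    (hj2 : K j ≤ U + (U - K i) * σl2 / σl1)
    (jlo : Fin n)
    (hjlo1 : U < K jlo) (hjlo2 : K jlo ≤ U + (U - K i) * σl2 / σl1)
    (hjlo3 : ∀ j', U < K j' → K j' ≤ U + (U - K i) * σl2 / σl1 → K j' ≤ K jlo)
    (IVstar : ℝ → ℝ → ℝ)
    (hIVstar : ∀ K' τ : ℝ, 0 < K' → 0 < τ → 0 < IVstar K' τ ∧
      bsCall U K' τ (IVstar K' τ) = pclvgCall σu1 σu2 U K' τ)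
    (T : ℝ) (hT : 0 < T)
    (IV : Fin n → ℝ → ℝ) (hIVpos : ∀ j' τ, 0 < τ → τ ≤ T → 0 < IV j' τ)
    (hbeliefs : ∃ c : ℝ, 0 < c ∧ ∀ τ : ℝ, 0 < τ → τ ≤ T →
      (∀ i', K i' < U → c * IVstar (K i') (c ^ 2 * τ) ≤ IV i' τ) ∧
      (∀ j', U < K j' → IV j' τ ≤ c * IVstar (K j') (c ^ 2 * τ))) :
    ∃ T' : ℝ, 0 < T' ∧ T' ≤ T ∧ ∀ τ : ℝ, 0 < τ → τ ≤ T' →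
      bsCall U (K jlo) τ (IV jlo τ) - bsPut U (K i) τ (IV i τ) < 0 := by
  obtain ⟨c, hc, hbel⟩ := hbeliefs
  have hKi : 0 < K i := hKpos i
  have hjKjlo : U + (U - K i) * σu2 / σu1 < K jlo := by
    have hpos : 0 ≤ (U - K i) * σu2 / σu1 :=
      div_nonneg (mul_nonneg (by linarith) hu2.le) hu1.le
    have hUj : U < K j := by linarith
    have := hjlo3 j hUj hj2
    linarith
  obtain ⟨s0, hs0, hkey⟩ := pclvg_key σu1 σu2 U (K i) (K jlo) hu1 hu2 hKi hi hjKjlo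
  refine ⟨min T (s0 / c ^ 2), lt_min hT (by positivity), min_le_left _ _, fun τ hτ hτ' => ?_⟩
  have hτT : τ ≤ T := le_trans hτ' (min_le_left _ _)
  have hs : 0 < c ^ 2 * τ := by positivity
  have hsle : c ^ 2 * τ ≤ s0 := by
    have h1 : τ ≤ s0 / c ^ 2 := le_trans hτ' (min_le_right _ _)
    have h2 : c ^ 2 * τ ≤ c ^ 2 * (s0 / c ^ 2) :=
      mul_le_mul_of_nonneg_left h1 (sq_nonneg c)
    have h3 : c ^ 2 * (s0 / c ^ 2) = s0 := by field_simp
    linarith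
  obtain ⟨hb1, hb2⟩ := hbel τ hτ hτT
  obtain ⟨hIVjlo_pos, hIVjlo_eq⟩ := hIVstar (K jlo) (c ^ 2 * τ) (hKpos jlo) hs
  obtain ⟨hIVi_pos, hIVi_eq⟩ := hIVstar (K i) (c ^ 2 * τ) hKi hs
  have c1 : bsCall U (K jlo) τ (IV jlo τ) ≤
      bsCall U (K jlo) τ (c * IVstar (K jlo) (c ^ 2 * τ)) :=
    bsCall_mono U (K jlo) τ hU (hKpos jlo) hτ (hIVpos jlo τ hτ hτT) (by positivity)
      (hb2 jlo hjlo1)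
  have c2 : bsCall U (K jlo) τ (c * IVstar (K jlo) (c ^ 2 * τ)) =
      pclvgCall σu1 σu2 U (K jlo) (c ^ 2 * τ) := by
    rw [bsCall_scale U (K jlo) τ _ c hτ hIVjlo_pos hc]
    exact hIVjlo_eq
  have p1 : pclvgPut σu1 σu2 U (K i) (c ^ 2 * τ) =
      bsPut U (K i) τ (c * IVstar (K i) (c ^ 2 * τ)) := by
    simp only [pclvgPut, bsPut]
    rw [← hIVi_eq, ← bsCall_scale U (K i) τ _ c hτ hIVi_pos hc]
    ring
  have p2 : bsPut U (K i) τ (c * IVstar (K i) (c ^ 2 * τ)) ≤ bsPut U (K i) τ (IV i τ) := by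
    simp only [bsPut]
    have := bsCall_mono U (K i) τ hU hKi hτ (by positivity) (hIVpos i τ hτ hτT) (hb1 i hi)
    linarith
  have hlt := hkey (c ^ 2 * τ) hs hsle
  linarith
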